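/- arXiv:1502.05573 — 2 statements merged into one kernel-verified Lean document; each statement's English description precedes it below -/
import Mathlib

section
/- Let R : ℕ → ℝ with R(n) ≥ 1 and let t ∈ [0,∞)^ℕ. For each fixed k ∈ ℕ, the set { t' ∈ [0,∞)^ℕ : ∀ n ≥ k, exp(tₙ') ≤ R(n)·exp(tₙ) } is closed and nowhere dense in [0,∞)^ℕ. -/
open Topology


/-- For `R : ℕ → ℝ` with `R n ≥ 1`, `t ∈ [0,∞)^ℕ` and fixed `k`, the set
`{ t' : ∀ n ≥ k, exp (t' n) ≤ R n * exp (t n) }` is closed and nowhere dense in `[0,∞)^ℕ`. -/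
theorem stmt4 (R : ℕ → ℝ) (hR : ∀ n, 1 ≤ R n) (t : ℕ → NNReal) (k : ℕ) :
    IsClosed {t' : ℕ → NNReal | ∀ n ≥ k, Real.exp (t' n) ≤ R n * Real.exp (t n)} ∧
    IsNowhereDense {t' : ℕ → NNReal | ∀ n ≥ k, Real.exp (t' n) ≤ R n * Real.exp (t n)} := by
  set S := {t' : ℕ → NNReal | ∀ n ≥ k, Real.exp (t' n) ≤ R n * Real.exp (t n)} with hS
  have hclosed : IsClosed S := by
    have : S = ⋂ n ∈ {m | k ≤ m},
        {t' : ℕ → NNReal | Real.exp (t' n) ≤ R n * Real.exp (t n)} := by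
      ext x; simp [hS, Set.mem_iInter]
    rw [this]
    refine isClosed_biInter fun n _ => ?_
    exact isClosed_le ((Real.continuous_exp.comp NNReal.continuous_coe).comp
      (continuous_apply n)) continuous_const
  refine ⟨hclosed, ?_⟩
  rw [hclosed.isNowhereDense_iff]
  rw [Set.eq_empty_iff_forall_notMem]
  intro x hx
  have hmem : S ∈ 𝓝 x := mem_interior_iff_mem_nhds.mp hx
  rw [nhds_pi, Filter.mem_pi] at hmem
  obtain ⟨I, hIfin, U, hU, hsub⟩ := hmem
  obtain ⟨m, hm⟩ := hIfin.bddAbove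
  set n := max k (m + 1) with hn
  have hnI : n ∉ I := by
    intro h
    have h2 := hm h
    omega
  have hRpos : (0:ℝ) < R n := lt_of_lt_of_le one_pos (hR n)
  set c : NNReal := ⟨Real.log (R n) + t n + 1, by have h1 := Real.log_nonneg (hR n); have h2 := (t n).coe_nonneg; linarith⟩ with hc
  set y : ℕ → NNReal := Function.update x n c with hy
  have hymem : y ∈ S := by
    apply hsub
    intro i hi
    have : y i = x i := Function.update_of_ne (by rintro rfl; exact hnI hi) _ _
    rw [this]
    exact mem_of_mem_nhds (hU i)
  have hle := hymem n (le_max_left _ _)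
  have hyn : (y n : ℝ) = Real.log (R n) + t n + 1 := by
    rw [hy, Function.update_self, hc]; rfl
  rw [hyn] at hle
  have : Real.exp (Real.log (R n) + ↑(t n) + 1) = R n * Real.exp (t n) * Real.exp 1 := by
    rw [Real.exp_add, Real.exp_add, Real.exp_log hRpos]
  rw [this] at hle
  have hpos : 0 < R n * Real.exp (t n) := by positivity
  have he : (1:ℝ) < Real.exp 1 := by have := Real.exp_one_gt_d9; linarith
  nlinarith [hpos, he]
end

section
/- Let t ∈ [0,∞)^ℕ, let R : ℕ → ℝ with R(n) ≥ 1, and let C ⊆ [0,∞)^ℕ be nonmeager. Then there exists t' ∈ C such that exp(tₙ') > R(n)·exp(tₙ) for infinitely many n ∈ ℕ. -/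
/-- For `t ∈ [0,∞)^ℕ`, `R : ℕ → ℝ` with `R n ≥ 1`, and a nonmeager set
`C ⊆ [0,∞)^ℕ`, there exists `t' ∈ C` with `exp (t' n) > R n * exp (t n)` for infinitely
many `n`. -/
theorem stmt6 (t : ℕ → NNReal) (R : ℕ → ℝ) (hR : ∀ n, 1 ≤ R n)
    (C : Set (ℕ → NNReal)) (hC : ¬ IsMeagre C) :
    ∃ t' ∈ C, {n : ℕ | R n * Real.exp (t n) < Real.exp (t' n)}.Infinite := by
  set F : ℕ → Set (ℕ → NNReal) :=
    fun N => {f | ∀ n, N ≤ n → Real.exp (f n) ≤ R n * Real.exp (t n)} with hF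
  by_contra h
  push_neg at h
  -- C ⊆ ⋃ N, F N
  have hsub : C ⊆ ⋃ N, F N := by
    intro f hf
    have hfin : {n : ℕ | R n * Real.exp (t n) < Real.exp (f n)}.Finite :=
      h f hf
    obtain ⟨b, hb⟩ := hfin.bddAbove
    refine Set.mem_iUnion.mpr ⟨b + 1, fun n hn => ?_⟩
    by_contra hlt
    push_neg at hlt
    have := hb (Set.mem_setOf.mpr hlt)
    omega
  -- each F N is closed
  have hclosed : ∀ N, IsClosed (F N) := by
    intro N
    have : F N = ⋂ n, ⋂ (_ : N ≤ n), {f : ℕ → NNReal | Real.exp (f n) ≤ R n * Real.exp (t n)} := by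
      ext f; simp [hF]
    rw [this]
    refine isClosed_iInter fun n => isClosed_iInter fun _ => ?_
    exact isClosed_le ((Real.continuous_exp.comp NNReal.continuous_coe).comp
      (continuous_apply n)) continuous_const
  -- each F N is nowhere dense
  have hnwd : ∀ N, IsNowhereDense (F N) := by
    intro N
    rw [(hclosed N).isNowhereDense_iff]
    rw [Set.eq_empty_iff_forall_notMem]
    intro f hf
    rw [mem_interior_iff_mem_nhds, nhds_pi, Filter.mem_pi] at hf
    obtain ⟨I, hI, V, hV, hVF⟩ := hf
    obtain ⟨n, hn⟩ := (Set.Finite.infinite_compl (hI.union (Set.finite_Iic N))).nonempty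
    simp only [Set.mem_compl_iff, Set.mem_union, Set.mem_Iic, not_or, not_le] at hn
    set M : NNReal := t n + Real.toNNReal (Real.log (R n)) + 1 with hM
    set g : ℕ → NNReal := Function.update f n M with hg
    have hgI : g ∈ I.pi V := by
      intro i hi
      have : g i = f i := Function.update_of_ne (fun h => hn.1 (by rw [h] at hi; exact hi)) _ _
      rw [this]
      exact mem_of_mem_nhds (hV i)
    have hgF := hVF hgI
    have hgn := hgF n hn.2.le
    have hgn' : (g n : ℝ) = (t n : ℝ) + max (Real.log (R n)) 0 + 1 := by
      simp [hg, hM, Function.update_self, Real.coe_toNNReal']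
    have hR0 : (0:ℝ) < R n := lt_of_lt_of_le one_pos (hR n)
    have : R n * Real.exp (t n) < Real.exp (g n) := by
      rw [hgn']
      calc R n * Real.exp (t n) = Real.exp (Real.log (R n) + t n) := by
            rw [Real.exp_add, Real.exp_log hR0]
        _ < Real.exp ((t n : ℝ) + max (Real.log (R n)) 0 + 1) := by
            apply Real.exp_lt_exp.mpr
            have := le_max_left (Real.log (R n)) 0
            linarith
    exact absurd hgn (not_le.mpr this)
  -- conclude meagerness
  apply hC
  apply IsMeagre.mono hsub
  rw [isMeagre_iff_countable_union_isNowhereDense]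
  exact ⟨Set.range F, by rintro s ⟨N, rfl⟩; exact hnwd N, Set.countable_range F,
    by rw [Set.sUnion_range]⟩
end
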